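/- For all natural numbers L and N with N ≤ L and L ≡ N (mod 2), and every real number k, the Fourier–Legendre coefficient a_{LN}(k) = ((2L+1)/2) ∫_{−1}^{1} J_N(kx) P_L(x) dx equals √π · 2^{−2L−1} · (2L+1) · (−1)^{(L−N)/2} · k^L · (C(L, (L−N)/2) / Γ(L+3/2)) · ∑_{M=0}^∞ [ ((L+1)/2)_M · ((L+2)/2)_M / ( (L+3/2)_M · ((L−N)/2+1)_M · ((L+N)/2+1)_M ) ] · (−k²/4)^M / M!. -/

import Mathlib

open Real

/-- Bessel function of the first kind of integer order `N`, defined by its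
everywhere-convergent power series. -/
noncomputable def besselJ (N : ℕ) (x : ℝ) : ℝ :=
  ∑' m : ℕ, (-1 : ℝ) ^ m * (x / 2) ^ (2 * m + N) /
    ((m.factorial : ℝ) * ((m + N).factorial : ℝ))

/-- Legendre polynomial of degree `L` via Rodrigues' formula. -/
noncomputable def legendreP (L : ℕ) : Polynomial ℝ :=
  Polynomial.C (1 / ((2 : ℝ) ^ L * (L.factorial : ℝ))) *
    (⇑Polynomial.derivative)^[L] ((Polynomial.X ^ 2 - 1) ^ L)

/-- The Fourier–Legendre coefficient `a_{LN}(k)` of `J_N(k·)`. -/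
noncomputable def fourierLegendreCoeffJ (L N : ℕ) (k : ℝ) : ℝ :=
  ((2 * (L : ℝ) + 1) / 2) * ∫ x in (-1:ℝ)..1, besselJ N (k * x) * (legendreP L).eval x

/-- The Pochhammer symbol (rising factorial) `(a)_M = a(a+1)⋯(a+M-1)`. -/
noncomputable def poch (a : ℝ) (M : ℕ) : ℝ := ∏ i ∈ Finset.range M, (a + i)


open Polynomial intervalIntegral MeasureTheory

lemma poch_zero (a : ℝ) : poch a 0 = 1 := by simp [poch]

lemma poch_succ (a : ℝ) (M : ℕ) : poch a (M+1) = poch a M * (a + M) := by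
  simp [poch, Finset.prod_range_succ]

lemma poch_nat (n M : ℕ) : poch ((n:ℝ)+1) M = ((M+n).factorial : ℝ) / n.factorial := by
  induction M with
  | zero =>
      have hn : (n.factorial : ℝ) ≠ 0 := Nat.cast_ne_zero.mpr (Nat.factorial_ne_zero n)
      simp [poch_zero]
      field_simp
  | succ M ih =>
      rw [poch_succ, ih]
      have h : (M+1+n).factorial = (M+n).factorial * (M+n+1) := by
        have : M+1+n = (M+n)+1 := by omega
        rw [this, Nat.factorial_succ]; ring
      rw [h]
      have hn : (n.factorial : ℝ) ≠ 0 := Nat.cast_ne_zero.mpr (Nat.factorial_ne_zero n)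
      have hm : ((M+n).factorial : ℝ) ≠ 0 := Nat.cast_ne_zero.mpr (Nat.factorial_ne_zero _)
      rw [div_mul_eq_mul_div, div_eq_div_iff hn hn]
      push_cast
      ring

lemma poch_add_half (L M : ℕ) : poch ((L:ℝ)+3/2) M =
    ((2*(L+M)+1).factorial : ℝ) * L.factorial /
      ((L+M).factorial * (2*L+1).factorial * 4^M) := by
  induction M with
  | zero =>
      have f1 : ((L).factorial : ℝ) ≠ 0 := Nat.cast_ne_zero.mpr (Nat.factorial_ne_zero _)
      have f2 : (((2*L+1)).factorial : ℝ) ≠ 0 := Nat.cast_ne_zero.mpr (Nat.factorial_ne_zero _)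
      simp [poch_zero]
      field_simp
  | succ M ih =>
      rw [poch_succ, ih]
      have h1 : (2*(L+(M+1))+1).factorial
          = (2*(L+M)+1).factorial * (2*(L+M)+2) * (2*(L+M)+3) := by
        have : 2*(L+(M+1))+1 = (2*(L+M)+1)+1+1 := by ring
        rw [this, Nat.factorial_succ, Nat.factorial_succ]; ring
      have h2 : (L+(M+1)).factorial = (L+M).factorial * (L+M+1) := by
        have : L+(M+1) = (L+M)+1 := by ring
        rw [this, Nat.factorial_succ]; ring
      rw [h1, h2]
      have f1 : ((L+M).factorial : ℝ) ≠ 0 := Nat.cast_ne_zero.mpr (Nat.factorial_ne_zero _)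
      have f2 : ((2*L+1).factorial : ℝ) ≠ 0 := Nat.cast_ne_zero.mpr (Nat.factorial_ne_zero _)
      have f4 : (4:ℝ)^M ≠ 0 := by positivity
      field_simp
      push_cast
      ring

lemma poch_pair (L M : ℕ) : poch (((L:ℝ)+1)/2) M * poch (((L:ℝ)+2)/2) M =
    ((2*M+L).factorial : ℝ) / (L.factorial * 4^M) := by
  induction M with
  | zero =>
      have f1 : ((L).factorial : ℝ) ≠ 0 := Nat.cast_ne_zero.mpr (Nat.factorial_ne_zero _)
      simp [poch_zero]
      field_simp
  | succ M ih =>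
      rw [poch_succ, poch_succ]
      have h1 : (2*(M+1)+L).factorial = (2*M+L).factorial * (2*M+L+1) * (2*M+L+2) := by
        have : 2*(M+1)+L = (2*M+L)+1+1 := by ring
        rw [this, Nat.factorial_succ, Nat.factorial_succ]; ring
      rw [show poch (((L:ℝ)+1)/2) M * ((↑L+1)/2 + ↑M) * (poch (((L:ℝ)+2)/2) M * ((↑L+2)/2 + ↑M))
          = poch (((L:ℝ)+1)/2) M * poch (((L:ℝ)+2)/2) M * (((↑L+1)/2 + ↑M) * ((↑L+2)/2 + ↑M)) from by ring,
        ih, h1]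
      have f1 : ((L).factorial : ℝ) ≠ 0 := Nat.cast_ne_zero.mpr (Nat.factorial_ne_zero _)
      have f4 : (4:ℝ)^M ≠ 0 := by positivity
      field_simp
      push_cast
      ring

lemma Gamma_L_three_half (L : ℕ) : Real.Gamma ((L:ℝ)+3/2) =
    Real.sqrt π * ((2*L+1).factorial : ℝ) / (2^(2*L+1) * L.factorial) := by
  have h := Real.Gamma_mul_Gamma_add_half ((L:ℝ)+1)
  have h1 : Real.Gamma ((L:ℝ)+1) = L.factorial := Real.Gamma_nat_eq_factorial L
  have h2 : Real.Gamma (2*((L:ℝ)+1)) = ((2*L+1).factorial : ℝ) := by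
    rw [show 2*((L:ℝ)+1) = ((2*L+1 : ℕ) : ℝ)+1 from by push_cast; ring]
    exact Real.Gamma_nat_eq_factorial _
  have h3 : (2:ℝ) ^ (1 - 2*((L:ℝ)+1)) = ((2:ℝ)^(2*L+1))⁻¹ := by
    rw [show 1 - 2*((L:ℝ)+1) = -((2*L+1 : ℕ):ℝ) from by push_cast; ring,
      Real.rpow_neg (by norm_num), Real.rpow_natCast]
  rw [h1, show (L:ℝ)+1+1/2 = (L:ℝ)+3/2 from by ring, h2, h3] at h
  have f1 : ((L).factorial : ℝ) ≠ 0 := Nat.cast_ne_zero.mpr (Nat.factorial_ne_zero _)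
  have f2 : ((2:ℝ)^(2*L+1)) ≠ 0 := by positivity
  field_simp at h ⊢
  linarith [h]

lemma poly_intervalIntegrable (p : Polynomial ℝ) (a b : ℝ) :
    IntervalIntegrable (fun x => p.eval x) MeasureTheory.volume a b :=
  (p.continuous_aeval.intervalIntegrable a b)

lemma poly_ftc (p : Polynomial ℝ) (a b : ℝ) :
    ∫ x in a..b, (derivative p).eval x = p.eval b - p.eval a := by
  refine intervalIntegral.integral_eq_sub_of_hasDerivAt (fun x _ => p.hasDerivAt x) ?_
  exact poly_intervalIntegrable _ a b

lemma poly_parts (p q : Polynomial ℝ) (a b : ℝ) :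
    ∫ x in a..b, p.eval x * (derivative q).eval x
      = p.eval b * q.eval b - p.eval a * q.eval a
        - ∫ x in a..b, (derivative p).eval x * q.eval x := by
  have h := poly_ftc (p * q) a b
  rw [derivative_mul] at h
  have hsplit : ∫ x in a..b, (derivative p * q + p * derivative q).eval x
      = (∫ x in a..b, (derivative p).eval x * q.eval x)
        + ∫ x in a..b, p.eval x * (derivative q).eval x := by
    simp only [eval_add, eval_mul]
    exact intervalIntegral.integral_add
      (((derivative p).continuous_aeval.mul q.continuous_aeval).intervalIntegrable a b)
      ((p.continuous_aeval.mul (derivative q).continuous_aeval).intervalIntegrable a b)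
  rw [hsplit, eval_mul, eval_mul] at h
  linarith

lemma dvd_iter (L k : ℕ) (hk : k ≤ L) :
    ((X:Polynomial ℝ)^2 - 1)^(L-k) ∣ derivative^[k] (((X:Polynomial ℝ)^2 - 1)^L) := by
  induction k with
  | zero => simp
  | succ k ih =>
      obtain ⟨r, hr⟩ := ih (le_of_lt (Nat.lt_of_succ_le hk))
      rw [Function.iterate_succ_apply', hr, derivative_mul, derivative_pow]
      have hLk : L - k = (L - (k+1)) + 1 := by omega
      apply dvd_add
      · have h2 : (L-k) - 1 = L - (k+1) := by omega
        rw [h2]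
        exact ((dvd_mul_left _ _).mul_right _).mul_right _
      · rw [hLk, pow_succ]
        exact (dvd_mul_right _ _).mul_right _

lemma eval_iter_zero (L k : ℕ) (hk : k < L) (x : ℝ) (hx : x^2 = 1) :
    (derivative^[k] (((X:Polynomial ℝ)^2 - 1)^L)).eval x = 0 := by
  obtain ⟨r, hr⟩ := dvd_iter L k (le_of_lt hk)
  rw [hr, eval_mul, eval_pow, eval_sub, eval_pow, eval_one, eval_X, hx, sub_self,
    zero_pow (by omega), zero_mul]

lemma int_iter (L : ℕ) : ∀ k ≤ L, ∀ p : Polynomial ℝ,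
    (∫ x in (-1:ℝ)..1, p.eval x * (derivative^[k] (((X:Polynomial ℝ)^2 - 1)^L)).eval x)
      = (-1:ℝ)^k * ∫ x in (-1:ℝ)..1,
          (derivative^[k] p).eval x * (((X:Polynomial ℝ)^2 - 1)^L).eval x := by
  intro k
  induction k with
  | zero => intro _ p; simp
  | succ k ih =>
      intro hk p
      rw [Function.iterate_succ_apply' derivative k]
      rw [poly_parts p (derivative^[k] (((X:Polynomial ℝ)^2 - 1)^L)) (-1) 1]
      rw [eval_iter_zero L k (by omega) 1 (by norm_num),
        eval_iter_zero L k (by omega) (-1) (by norm_num)]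
      rw [ih (by omega) (derivative p)]
      rw [← Function.iterate_succ_apply derivative k p]
      ring

lemma J_rec (M L : ℕ) :
    ((2*(M:ℝ)+1) * ∫ x in (-1:ℝ)..1, x^(2*M)*(x^2-1)^(L+1))
      + ((2*(L:ℝ)+2) * ∫ x in (-1:ℝ)..1, x^(2*(M+1))*(x^2-1)^L) = 0 := by
  have key : (∫ x in (-1:ℝ)..1,
      ((2*(M:ℝ)+1) * (x^(2*M)*(x^2-1)^(L+1)) + (2*(L:ℝ)+2) * (x^(2*(M+1))*(x^2-1)^L))) = 0 := by
    have hd : ∀ x : ℝ, HasDerivAt (fun x : ℝ => x^(2*M+1) * (x^2-1)^(L+1))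
        ((2*(M:ℝ)+1) * (x^(2*M)*(x^2-1)^(L+1)) + (2*(L:ℝ)+2) * (x^(2*(M+1))*(x^2-1)^L)) x := by
      intro x
      have h1 : HasDerivAt (fun x : ℝ => x^(2*M+1)) ((2*M+1 : ℕ) * x^(2*M)) x := by
        simpa using hasDerivAt_pow (2*M+1) x
      have h2 : HasDerivAt (fun x : ℝ => x^2 - 1) (2*x) x := by
        simpa using (hasDerivAt_pow 2 x).sub_const 1
      have h3 := h2.fun_pow (L+1)
      have h := h1.fun_mul h3
      refine h.congr_deriv ?_
      simp only [Nat.add_sub_cancel]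
      push_cast
      ring
    rw [integral_eq_sub_of_hasDerivAt (fun x _ => hd x)
      (Continuous.intervalIntegrable (by fun_prop) _ _)]
    norm_num
  rw [integral_add (Continuous.intervalIntegrable (by fun_prop) _ _)
      (Continuous.intervalIntegrable (by fun_prop) _ _),
    intervalIntegral.integral_const_mul, intervalIntegral.integral_const_mul] at key
  exact key

lemma J_closed (L : ℕ) : ∀ M : ℕ, (∫ x in (-1:ℝ)..1, x^(2*M)*(x^2-1)^L)
    = (-1:ℝ)^L * 2 * 4^L * (L.factorial) * ((M+L).factorial) * ((2*M).factorial) /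
      (((2*M+2*L+1).factorial) * (M.factorial)) := by
  induction L with
  | zero =>
      intro M
      simp only [pow_zero, mul_one]
      rw [integral_pow]
      have h1 : (2*M+1).factorial = (2*M).factorial * (2*M+1) := by
        rw [Nat.factorial_succ]; ring
      rw [show 2*M+2*0+1 = 2*M+1 from by ring, h1]
      have f1 : ((2*M).factorial : ℝ) ≠ 0 := Nat.cast_ne_zero.mpr (Nat.factorial_ne_zero _)
      have f2 : ((M).factorial : ℝ) ≠ 0 := Nat.cast_ne_zero.mpr (Nat.factorial_ne_zero _)
      have : ((-1:ℝ))^(2*M+1) = -1 := by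
        rw [pow_succ, pow_mul]; norm_num
      rw [this]
      field_simp
      push_cast
      ring
  | succ L ih =>
      intro M
      have hrec := J_rec M L
      have hM : (2*(M:ℝ)+1) ≠ 0 := by positivity
      have hB := ih (M+1)
      have : (∫ x in (-1:ℝ)..1, x^(2*M)*(x^2-1)^(L+1))
          = -((2*(L:ℝ)+2) / (2*(M:ℝ)+1)) * ∫ x in (-1:ℝ)..1, x^(2*(M+1))*(x^2-1)^L := by
        field_simp
        linarith [hrec]
      rw [this, hB]
      have e1 : (M+1+L).factorial = (M+L).factorial * (M+L+1) := by
        rw [show M+1+L = (M+L)+1 from by ring, Nat.factorial_succ]; ring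
      have e2 : (2*(M+1)).factorial = (2*M).factorial * (2*M+1) * (2*M+2) := by
        rw [show 2*(M+1) = (2*M)+1+1 from by ring, Nat.factorial_succ, Nat.factorial_succ]; ring
      have e3 : (2*M+2*(L+1)+1).factorial = (2*(M+1)+2*L+1).factorial := by
        congr 1; ring
      have e4 : (M+(L+1)).factorial = (M+L).factorial * (M+L+1) := by
        rw [show M+(L+1) = (M+L)+1 from by ring, Nat.factorial_succ]; ring
      have e5 : (M+1).factorial = M.factorial * (M+1) := by
        rw [Nat.factorial_succ]; ring
      have e0 : (L+1).factorial = L.factorial * (L+1) := by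
        rw [Nat.factorial_succ]; ring
      rw [e0, e1, e2, e3, e4, e5]
      have f1 : ((M+L).factorial : ℝ) ≠ 0 := Nat.cast_ne_zero.mpr (Nat.factorial_ne_zero _)
      have f2 : ((2*M).factorial : ℝ) ≠ 0 := Nat.cast_ne_zero.mpr (Nat.factorial_ne_zero _)
      have f3 : (((2*(M+1)+2*L+1)).factorial : ℝ) ≠ 0 := Nat.cast_ne_zero.mpr (Nat.factorial_ne_zero _)
      have f4 : ((M).factorial : ℝ) ≠ 0 := Nat.cast_ne_zero.mpr (Nat.factorial_ne_zero _)
      field_simp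
      push_cast
      ring

lemma int_legendre_aux (L n : ℕ) :
    (∫ x in (-1:ℝ)..1, x^n * (legendreP L).eval x)
      = (1 / ((2:ℝ)^L * L.factorial)) * ((-1:ℝ)^L *
          ∫ x in (-1:ℝ)..1, (derivative^[L] ((X:Polynomial ℝ)^n)).eval x
            * (((X:Polynomial ℝ)^2 - 1)^L).eval x) := by
  have h : ∀ x : ℝ, x^n * (legendreP L).eval x
      = (1 / ((2:ℝ)^L * L.factorial)) *
        (((X:Polynomial ℝ)^n).eval x * (derivative^[L] (((X:Polynomial ℝ)^2 - 1)^L)).eval x) := by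
    intro x
    simp [legendreP]
    ring
  rw [intervalIntegral.integral_congr (fun x _ => h x), intervalIntegral.integral_const_mul,
    int_iter L L le_rfl]

lemma int_legendre_lt (L n : ℕ) (h : n < L) :
    (∫ x in (-1:ℝ)..1, x^n * (legendreP L).eval x) = 0 := by
  rw [int_legendre_aux, Polynomial.iterate_derivative_X_pow_eq_smul]
  rw [Nat.descFactorial_eq_zero_iff_lt.mpr h]
  simp

lemma int_legendre_eq (L M : ℕ) :
    (∫ x in (-1:ℝ)..1, x^(2*M+L) * (legendreP L).eval x)
      = 2^(L+1) * ((2*M+L).factorial) * ((M+L).factorial) /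
        (((2*M+2*L+1).factorial) * (M.factorial)) := by
  rw [int_legendre_aux, Polynomial.iterate_derivative_X_pow_eq_smul]
  have hsub : 2*M+L-L = 2*M := by omega
  rw [hsub]
  have h2 : ∀ x : ℝ, ((((2*M+L).descFactorial L : ℝ)) • (X:Polynomial ℝ)^(2*M)).eval x
      * (((X:Polynomial ℝ)^2 - 1)^L).eval x
      = (((2*M+L).descFactorial L : ℝ)) * (x^(2*M) * (x^2-1)^L) := by
    intro x; simp; ring
  rw [intervalIntegral.integral_congr (fun x _ => h2 x), intervalIntegral.integral_const_mul,
    J_closed]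
  have hdesc := Nat.factorial_mul_descFactorial (show L ≤ 2*M+L by omega) (n := 2*M+L)
  rw [hsub] at hdesc
  have f1 : ((L).factorial : ℝ) ≠ 0 := Nat.cast_ne_zero.mpr (Nat.factorial_ne_zero _)
  have f2 : (((2*M+2*L+1)).factorial : ℝ) ≠ 0 := Nat.cast_ne_zero.mpr (Nat.factorial_ne_zero _)
  have f3 : ((M).factorial : ℝ) ≠ 0 := Nat.cast_ne_zero.mpr (Nat.factorial_ne_zero _)
  have f4 : ((2*M).factorial : ℝ) ≠ 0 := Nat.cast_ne_zero.mpr (Nat.factorial_ne_zero _)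
  have f5 : ((2:ℝ)^L) ≠ 0 := by positivity
  have hd : ((2*M+L).descFactorial L : ℝ) = ((2*M+L).factorial : ℝ) / ((2*M).factorial : ℝ) := by
    rw [eq_div_iff f4, mul_comm]
    exact_mod_cast congrArg (Nat.cast : ℕ → ℝ) hdesc
  rw [hd]
  have h4 : ((4:ℝ))^L = 2^L * 2^L := by rw [← mul_pow]; norm_num
  field_simp
  ring_nf
  rw [show ((-1:ℝ))^(L*2) = 1 from by rw [pow_mul']; norm_num, h4]
  ring

lemma term_eq (L N d e M : ℕ) (k : ℝ) (h2d : 2*d+N = L) (he : e = d+N) :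
    ((2*(L:ℝ)+1)/2) * ((-1:ℝ)^(M+d) * (k/2)^(2*M+L) /
        ((M+d).factorial * (M+e).factorial) *
      (2^(L+1) * ((2*M+L).factorial) * ((M+L).factorial) /
        (((2*M+2*L+1).factorial) * (M.factorial))))
    = Real.sqrt π * (2:ℝ)^(-(2*(L:ℤ))-1) * (2*(L:ℝ)+1) * (-1:ℝ)^d * k^L *
        ((L.choose d : ℝ) / Real.Gamma ((L:ℝ)+3/2)) *
        ((poch (((L:ℝ)+1)/2) M * poch (((L:ℝ)+2)/2) M /
          (poch ((L:ℝ)+3/2) M * poch (((L:ℝ)-(N:ℝ))/2+1) M *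
            poch (((L:ℝ)+(N:ℝ))/2+1) M)) *
          (-k^2/4)^M / (M.factorial : ℝ)) := by
  have hL : (L:ℝ) = 2*(d:ℝ)+(N:ℝ) := by exact_mod_cast congrArg (Nat.cast : ℕ → ℝ) h2d.symm
  have hd1 : ((L:ℝ)-(N:ℝ))/2+1 = (d:ℝ)+1 := by rw [hL]; ring
  have hd2 : ((L:ℝ)+(N:ℝ))/2+1 = (e:ℝ)+1 := by rw [hL]; push_cast [he]; ring
  rw [hd1, hd2, poch_nat, poch_nat, poch_pair, poch_add_half, Gamma_L_three_half]
  rw [Nat.cast_choose ℝ (show d ≤ L by omega)]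
  have hLd : L - d = e := by omega
  rw [hLd]
  -- power rewrites
  have hz : (2:ℝ)^(-(2*(L:ℤ))-1) = ((2:ℝ)^(2*L+1))⁻¹ := by
    rw [show -(2*(L:ℤ))-1 = -((2*L+1 : ℕ):ℤ) from by push_cast; ring, zpow_neg, zpow_natCast]
  rw [hz]
  have hp1 : ((2*(L+M)+1).factorial) = ((2*M+2*L+1).factorial) := by congr 1; ring
  have hp2 : ((L+M).factorial) = ((M+L).factorial) := by congr 1; ring
  rw [hp1, hp2]
  have hk1 : (k/2)^(2*M+L) = k^(2*M)*k^L / ((2:ℝ)^M*(2:ℝ)^M*(2:ℝ)^L) := by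
    rw [div_pow, pow_add k, show (2:ℝ)^(2*M+L) = 2^M*2^M*2^L from by
      rw [pow_add, show 2*M = M+M from two_mul M, pow_add]]
  have hk2 : (-k^2/4)^M = (-1:ℝ)^M * (k^(2*M)) / ((2:ℝ)^M*(2:ℝ)^M) := by
    rw [div_pow, neg_pow, ← pow_mul, show ((4:ℝ))^M = 2^M*2^M from by rw [← mul_pow]; norm_num]
  have h4M : ((4:ℝ))^M = 2^M*2^M := by rw [← mul_pow]; norm_num
  have h2L1 : ((2:ℝ))^(2*L+1) = 2^L*2^L*2 := by rw [pow_succ, two_mul, pow_add]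
  have h2L1' : ((2:ℝ))^(L+1) = 2^L*2 := by rw [pow_succ]
  have hmd : (-1:ℝ)^(M+d) = (-1:ℝ)^M * (-1:ℝ)^d := pow_add _ _ _
  rw [hk1, hk2, h4M, h2L1, h2L1', hmd]
  have fM : ((M).factorial : ℝ) ≠ 0 := Nat.cast_ne_zero.mpr (Nat.factorial_ne_zero _)
  have fMd : ((M+d).factorial : ℝ) ≠ 0 := Nat.cast_ne_zero.mpr (Nat.factorial_ne_zero _)
  have fMe : ((M+e).factorial : ℝ) ≠ 0 := Nat.cast_ne_zero.mpr (Nat.factorial_ne_zero _)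
  have fd : ((d).factorial : ℝ) ≠ 0 := Nat.cast_ne_zero.mpr (Nat.factorial_ne_zero _)
  have fe : ((e).factorial : ℝ) ≠ 0 := Nat.cast_ne_zero.mpr (Nat.factorial_ne_zero _)
  have fL : ((L).factorial : ℝ) ≠ 0 := Nat.cast_ne_zero.mpr (Nat.factorial_ne_zero _)
  have fML : ((M+L).factorial : ℝ) ≠ 0 := Nat.cast_ne_zero.mpr (Nat.factorial_ne_zero _)
  have f2ML : (((2*M+2*L+1)).factorial : ℝ) ≠ 0 := Nat.cast_ne_zero.mpr (Nat.factorial_ne_zero _)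
  have f2L : (((2*L+1)).factorial : ℝ) ≠ 0 := Nat.cast_ne_zero.mpr (Nat.factorial_ne_zero _)
  have f2ML' : (((2*M+L)).factorial : ℝ) ≠ 0 := Nat.cast_ne_zero.mpr (Nat.factorial_ne_zero _)
  have fsq : Real.sqrt π ≠ 0 := ne_of_gt (Real.sqrt_pos.mpr Real.pi_pos)
  have f2M : ((2:ℝ))^M ≠ 0 := by positivity
  have f2L' : ((2:ℝ))^L ≠ 0 := by positivity
  field_simp

section swap
variable (L N : ℕ) (k : ℝ)

/-- the `m`-th term function -/
noncomputable def FF (m : ℕ) (x : ℝ) : ℝ :=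
  ((-1 : ℝ) ^ m * (k * x / 2) ^ (2 * m + N) /
    ((m.factorial : ℝ) * ((m + N).factorial : ℝ))) * (legendreP L).eval x

lemma FF_cont (m : ℕ) : Continuous (FF L N k m) := by
  unfold FF
  have hP : Continuous fun x : ℝ => (legendreP L).eval x := (legendreP L).continuous
  fun_prop

lemma besselJ_mul (x : ℝ) :
    besselJ N (k * x) * (legendreP L).eval x = ∑' m, FF L N k m x := by
  unfold besselJ FF
  rw [← tsum_mul_right]

lemma FF_bound : ∃ C : ℝ, 0 ≤ C ∧ ∀ m : ℕ, ∀ x ∈ Set.Icc (-1:ℝ) 1,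
    ‖FF L N k m x‖ ≤ C * ((|k|/2)^N * ((k^2/4)^m / m.factorial)) := by
  obtain ⟨C, hC⟩ := (isCompact_Icc : IsCompact (Set.Icc (-1:ℝ) 1)).exists_bound_of_continuousOn
    ((legendreP L).continuous_aeval.continuousOn)
  have hC0 : 0 ≤ C := le_trans (norm_nonneg _) (hC 0 (by norm_num))
  refine ⟨C, hC0, fun m x hx => ?_⟩
  have hx1 : |x| ≤ 1 := abs_le.mpr ⟨hx.1, hx.2⟩
  have hkx : |k * x / 2| ≤ |k| / 2 := by
    rw [abs_div, abs_mul]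
    simp only [abs_two]
    apply div_le_div_of_nonneg_right ?_ (by norm_num)
    calc |k| * |x| ≤ |k| * 1 := by
          exact mul_le_mul_of_nonneg_left hx1 (abs_nonneg k)
      _ = |k| := mul_one _
  have hnorm : ‖FF L N k m x‖ = |k*x/2|^(2*m+N) /
      ((m.factorial:ℝ)*((m+N).factorial:ℝ)) * ‖(legendreP L).eval x‖ := by
    unfold FF
    rw [norm_mul]
    congr 1
    rw [Real.norm_eq_abs, abs_div, abs_mul, abs_pow, abs_pow, abs_neg, abs_one, one_pow,
      one_mul, abs_mul, Nat.abs_cast, Nat.abs_cast]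
  have key : ‖FF L N k m x‖ ≤ ((|k|/2)^(2*m+N) / m.factorial) * C := by
    rw [hnorm]
    have h2 : (m.factorial : ℝ) ≤ (m.factorial : ℝ) * ((m+N).factorial : ℝ) := by
      nth_rewrite 1 [← mul_one (m.factorial : ℝ)]
      apply mul_le_mul_of_nonneg_left _ (by positivity)
      exact_mod_cast Nat.one_le_iff_ne_zero.mpr (Nat.factorial_ne_zero _)
    have h1 : |k * x / 2| ^ (2*m+N) ≤ (|k|/2)^(2*m+N) :=
      pow_le_pow_left₀ (abs_nonneg _) hkx _
    have hfle : |k*x/2|^(2*m+N) / ((m.factorial:ℝ)*((m+N).factorial:ℝ))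
        ≤ (|k|/2)^(2*m+N) / m.factorial := by
      apply div_le_div₀ (by positivity) h1 (by positivity) h2
    exact mul_le_mul hfle (hC x hx) (norm_nonneg _) (by positivity)
  calc ‖FF L N k m x‖ ≤ ((|k|/2)^(2*m+N) / m.factorial) * C := key
    _ = C * ((|k|/2)^N * ((k^2/4)^m / m.factorial)) := by
        rw [pow_add, pow_mul, show (|k|/2)^2 = k^2/4 from by
          rw [div_pow, sq_abs]; norm_num]
        ring

lemma FF_integrableOn (m : ℕ) :
    IntegrableOn (FF L N k m) (Set.Ioc (-1:ℝ) 1) volume :=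
  (FF_cont L N k m).integrableOn_Ioc

lemma FF_summable_integral_norm :
    Summable (fun m => ∫ x in Set.Ioc (-1:ℝ) 1, ‖FF L N k m x‖) := by
  obtain ⟨C, hC0, hC⟩ := FF_bound L N k
  apply Summable.of_nonneg_of_le
    (fun m => integral_nonneg (fun x => norm_nonneg _))
    (fun m => ?_)
    (((Real.summable_pow_div_factorial (k^2/4)).mul_left (2 * (C * (|k|/2)^N))))
  have hmono : (∫ x in Set.Ioc (-1:ℝ) 1, ‖FF L N k m x‖)
      ≤ ∫ _x in Set.Ioc (-1:ℝ) 1, C * ((|k|/2)^N * ((k^2/4)^m / m.factorial)) := by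
    apply setIntegral_mono_on (FF_integrableOn L N k m).norm
      (integrableOn_const (by simp [Real.volume_Ioc]))
      measurableSet_Ioc
    intro x hx
    exact hC m x ⟨le_of_lt hx.1, hx.2⟩
  refine le_trans hmono ?_
  rw [setIntegral_const]
  simp only [Real.volume_Ioc, smul_eq_mul]
  rw [Real.volume_real_Ioc_of_le (by norm_num), show (1:ℝ) - (-1) = 2 from by norm_num]
  ring_nf
  apply le_of_eq
  ring

lemma integral_swap :
    (∫ x in (-1:ℝ)..1, besselJ N (k * x) * (legendreP L).eval x)
      = ∑' m, ∫ x in (-1:ℝ)..1, FF L N k m x := by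
  have hle : (-1:ℝ) ≤ 1 := by norm_num
  rw [intervalIntegral.integral_of_le hle]
  have hswap := MeasureTheory.integral_tsum_of_summable_integral_norm
    (μ := volume.restrict (Set.Ioc (-1:ℝ) 1)) (F := FF L N k)
    (FF_integrableOn L N k) (FF_summable_integral_norm L N k)
  rw [MeasureTheory.setIntegral_congr_fun measurableSet_Ioc
    (fun x _ => besselJ_mul L N k x), ← hswap]
  congr 1
  funext m
  rw [intervalIntegral.integral_of_le hle]

lemma FF_integral_summable :
    Summable (fun m => ∫ x in (-1:ℝ)..1, FF L N k m x) := by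
  have hle : (-1:ℝ) ≤ 1 := by norm_num
  have h := MeasureTheory.hasSum_integral_of_summable_integral_norm
    (μ := volume.restrict (Set.Ioc (-1:ℝ) 1)) (F := FF L N k)
    (FF_integrableOn L N k) (FF_summable_integral_norm L N k)
  have : Summable (fun m => ∫ x in Set.Ioc (-1:ℝ) 1, FF L N k m x) := ⟨_, h⟩
  refine this.congr (fun m => ?_)
  rw [intervalIntegral.integral_of_le hle]

end swap

lemma FF_integral (L N m : ℕ) (k : ℝ) :
    (∫ x in (-1:ℝ)..1, FF L N k m x)
      = ((-1:ℝ)^m * (k/2)^(2*m+N) / ((m.factorial : ℝ) * ((m+N).factorial : ℝ))) *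
        ∫ x in (-1:ℝ)..1, x^(2*m+N) * (legendreP L).eval x := by
  rw [← intervalIntegral.integral_const_mul]
  apply intervalIntegral.integral_congr
  intro x _
  unfold FF
  rw [show k * x / 2 = (k/2) * x from by ring, mul_pow]
  ring


/-- For `N ≤ L` with `L ≡ N (mod 2)`, the Fourier–Legendre coefficient
`a_{LN}(k)` equals `√π 2^{-2L-1} (2L+1) (-1)^{(L-N)/2} k^L (C(L,(L-N)/2)/Γ(L+3/2))`
times the `₂F₃` hypergeometric series with parameters
`((L+1)/2, L/2+1; L+3/2, (L-N)/2+1, (L+N)/2+1)` evaluated at `-k²/4`. -/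
theorem fourierLegendreCoeffJ_eq_2F3 (L N : ℕ) (hNL : N ≤ L) (hpar : L % 2 = N % 2)
    (k : ℝ) :
    fourierLegendreCoeffJ L N k =
      Real.sqrt π * (2 : ℝ) ^ (-(2 * (L : ℤ)) - 1) * (2 * (L : ℝ) + 1) *
        (-1 : ℝ) ^ ((L - N) / 2) * k ^ L *
        ((L.choose ((L - N) / 2) : ℝ) / Real.Gamma ((L : ℝ) + 3 / 2)) *
        ∑' M : ℕ,
          (poch (((L : ℝ) + 1) / 2) M * poch (((L : ℝ) + 2) / 2) M /
            (poch ((L : ℝ) + 3 / 2) M * poch (((L : ℝ) - (N : ℝ)) / 2 + 1) M *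
              poch (((L : ℝ) + (N : ℝ)) / 2 + 1) M)) *
          (-k ^ 2 / 4) ^ M / (M.factorial : ℝ) := by
  set d := (L - N) / 2 with hd
  set e := (L + N) / 2 with he'
  have h2d : 2*d + N = L := by omega
  have he : e = d + N := by omega
  set g := fun m => ∫ x in (-1:ℝ)..1, FF L N k m x with hg
  have hzero : ∀ i ∈ Finset.range d, g i = 0 := by
    intro i hi
    have hil : 2*i+N < L := by
      have := Finset.mem_range.mp hi
      omega
    rw [hg]
    simp only
    rw [FF_integral, int_legendre_lt L (2*i+N) hil, mul_zero]
  have hshift : ∑' m, g m = ∑' M, g (M + d) := by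
    rw [← Summable.sum_add_tsum_nat_add d (FF_integral_summable L N k),
      Finset.sum_eq_zero hzero, zero_add]
  have hgMd : ∀ M : ℕ, ((2*(L:ℝ)+1)/2) * g (M + d)
      = Real.sqrt π * (2:ℝ)^(-(2*(L:ℤ))-1) * (2*(L:ℝ)+1) * (-1:ℝ)^d * k^L *
        ((L.choose d : ℝ) / Real.Gamma ((L:ℝ)+3/2)) *
        ((poch (((L:ℝ)+1)/2) M * poch (((L:ℝ)+2)/2) M /
          (poch ((L:ℝ)+3/2) M * poch (((L:ℝ)-(N:ℝ))/2+1) M *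
            poch (((L:ℝ)+(N:ℝ))/2+1) M)) *
          (-k^2/4)^M / (M.factorial : ℝ)) := by
    intro M
    rw [hg]
    simp only
    rw [FF_integral]
    rw [show 2*(M+d)+N = 2*M+L from by omega, show M+d+N = M+e from by omega,
      int_legendre_eq L M]
    exact term_eq L N d e M k h2d he
  rw [fourierLegendreCoeffJ, integral_swap, hshift, ← tsum_mul_left]
  rw [show ∀ x y : ℝ, x = y ↔ x = y from fun _ _ => Iff.rfl]
  rw [← tsum_mul_left]
  exact tsum_congr hgMd
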